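/- Let α, β, γ₀ ∈ ℂ and q(z) = z³ + α z² + β z + γ₀. There exist real constants R > 0 and M > 0 such that for every z ∈ ℂ with |z| > R and every s ∈ ℂ satisfying s² = q(z)/z and |s − z| ≤ |z|/2, one has |s − z − α/2 + (α² − 4β)/(8z)| ≤ M/|z|². (Equivalently, the branch of √(q(z)/z) asymptotic to z at infinity has Laurent expansion z + α/2 − (α² − 4β)/(8z) + O(z⁻²), so its residue at infinity is (α² − 4β)/8.) -/

import Mathlib

/-- The branch of `√(q(z)/z)` asymptotic to `z` at infinity (singled out by the condition
`|s - z| ≤ |z|/2`) has Laurent expansion `z + α/2 - (α² - 4β)/(8z) + O(z⁻²)`. -/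
theorem stmt_2 (α β γ₀ : ℂ) :
    ∃ R > (0 : ℝ), ∃ M > (0 : ℝ), ∀ z s : ℂ,
      ‖z‖ > R →
      s ^ 2 = (z ^ 3 + α * z ^ 2 + β * z + γ₀) / z →
      ‖s - z‖ ≤ ‖z‖ / 2 →
      ‖s - z - α / 2 + (α ^ 2 - 4 * β) / (8 * z)‖ ≤ M / (‖z‖) ^ 2 := by
  set c : ℂ := (α ^ 2 - 4 * β) / 8 with hc
  set K : ℝ := ‖γ₀‖ + ‖α‖ * ‖c‖ + ‖c‖ ^ 2 with hK
  have hK0 : 0 ≤ K := by positivity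
  refine ⟨1 + ‖α‖ + ‖c‖ + ‖γ₀‖, by positivity,
    4 * K + 1, by positivity, fun z s hz hs hsz => ?_⟩
  have ha := norm_nonneg α
  have hcn := norm_nonneg c
  have hg := norm_nonneg γ₀
  have hz1 : (1 : ℝ) < ‖z‖ := by linarith
  have hz0' : (0:ℝ) < ‖z‖ := by linarith
  have hz0 : z ≠ 0 := by
    intro h; rw [h] at hz1; simp at hz1; linarith
  set t : ℂ := z + α / 2 - c / z with ht
  have key : (s - t) * (s + t) = (γ₀ + α * c) / z - c ^ 2 / z ^ 2 := by
    have h1 : (s - t) * (s + t) = s ^ 2 - t ^ 2 := by ring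
    rw [h1, hs, ht, hc]
    field_simp
    ring
  have hgoal : s - z - α / 2 + (α ^ 2 - 4 * β) / (8 * z) = s - t := by
    rw [ht, hc]; field_simp; ring
  rw [hgoal]
  -- bound on the product
  have habs : ‖(s - t) * (s + t)‖ ≤ 2 * K / ‖z‖ := by
    rw [key]
    have h2 : ‖(γ₀ + α * c) / z - c ^ 2 / z ^ 2‖ ≤
        ‖γ₀ + α * c‖ / ‖z‖ + ‖c‖ ^ 2 / ‖z‖ ^ 2 := by
      refine le_trans (norm_sub_le _ _) ?_
      simp [map_div₀, map_pow]
    refine h2.trans ?_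
    have hγ : ‖γ₀ + α * c‖ ≤ ‖γ₀‖ + ‖α‖ * ‖c‖ := by
      refine le_trans (norm_add_le _ _) ?_
      simp [map_mul]
    have h3 : ‖c‖ ^ 2 / ‖z‖ ^ 2 ≤ ‖c‖ ^ 2 / ‖z‖ := by
      apply div_le_div_of_nonneg_left (by positivity) hz0'
      · nlinarith
    have h4 : ‖γ₀ + α * c‖ / ‖z‖ ≤
        (‖γ₀‖ + ‖α‖ * ‖c‖) / ‖z‖ :=
      div_le_div_of_nonneg_right hγ hz0'.le
    have h5 : (‖γ₀‖ + ‖α‖ * ‖c‖) / ‖z‖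
        + ‖c‖ ^ 2 / ‖z‖ ≤ 2 * K / ‖z‖ := by
      rw [← add_div, hK]
      apply div_le_div_of_nonneg_right ?_ hz0'.le
      nlinarith
    linarith
  -- lower bound on |s + t|
  have hst : ‖z‖ / 2 ≤ ‖s + t‖ := by
    have h5 : (2:ℂ) * z = (s + t) - (s - z) - α / 2 + c / z := by rw [ht]; ring
    have h6 : ‖(2:ℂ) * z‖ ≤ ‖s + t‖ + ‖s - z‖
        + ‖α‖ / 2 + ‖c‖ / ‖z‖ := by
      rw [h5]
      calc ‖(s + t) - (s - z) - α / 2 + c / z‖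
          ≤ ‖(s + t) - (s - z) - α / 2‖ + ‖c / z‖ :=
            norm_add_le _ _
        _ ≤ ‖(s + t) - (s - z)‖ + ‖α / 2‖ + ‖c / z‖ := by
            have := norm_sub_le ((s + t) - (s - z)) (α / 2); linarith
        _ ≤ ‖s + t‖ + ‖s - z‖ + ‖α / 2‖ + ‖c / z‖ := by
            have := norm_sub_le (s + t) (s - z); linarith
        _ = ‖s + t‖ + ‖s - z‖ + ‖α‖ / 2
            + ‖c‖ / ‖z‖ := by
            simp [map_div₀]
    have h7 : ‖(2:ℂ) * z‖ = 2 * ‖z‖ := by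
      simp [map_mul]
    have h8 : ‖c‖ / ‖z‖ ≤ ‖c‖ := by
      rw [div_le_iff₀ hz0']; nlinarith
    linarith
  -- conclude
  have hmul : ‖s - t‖ * ‖s + t‖ ≤ 2 * K / ‖z‖ := by
    rw [← norm_mul]; exact habs
  have hA := norm_nonneg (s - t)
  rw [le_div_iff₀ (by positivity)]
  have h9 : ‖s - t‖ * (‖z‖ / 2) ≤ 2 * K / ‖z‖ :=
    le_trans (by nlinarith) hmul
  have h10 := mul_le_mul_of_nonneg_right h9 hz0'.le
  rw [div_mul_cancel₀ _ (ne_of_gt hz0')] at h10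
  nlinarith
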